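/- In ℝ³ let Γ₁ = {λ·(−1, t, t²) : 0 ≤ t ≤ 1, λ > 0} and Γ₂ = {λ·(1, t, t²) : 0 ≤ t ≤ 1, λ > 0}. Then: (a) Γ₁ and Γ₂ are closed cones in ℝ³\{0}; (b) the point (0, 2, 0) lies in the closure of Γ₁ + Γ₂ in ℝ³\{0} (indeed n·(−1, 1/n, 1/n²) + n·(1, 1/n, 1/n²) = (0, 2, 2/n) → (0, 2, 0) as n → ∞); (c) (0, 2, 0) ∉ (Γ₁ + Γ₂) ∪ Γ₁ ∪ Γ₂. In particular, the identity 'closure of Γ₁ + Γ₂ in ℝⁿ\{0} equals (Γ₁ + Γ₂) ∪ Γ₁ ∪ Γ₂' can fail when 0 ∈ Γ₁ + Γ₂. -/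

import Mathlib

open Pointwise

set_option linter.unnecessarySimpa false


lemma gamma_char (ε : ℝ) (hε : ε * ε = 1) :
    closure {x : Fin 3 → ℝ | ∃ t l : ℝ, 0 ≤ t ∧ t ≤ 1 ∧ 0 < l ∧ x = l • ![ε, t, t ^ 2]} \ {0}
      ⊆ {x : Fin 3 → ℝ | ∃ t l : ℝ, 0 ≤ t ∧ t ≤ 1 ∧ 0 < l ∧ x = l • ![ε, t, t ^ 2]} := by
  set Γ := {x : Fin 3 → ℝ | ∃ t l : ℝ, 0 ≤ t ∧ t ≤ 1 ∧ 0 < l ∧ x = l • ![ε, t, t ^ 2]}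
  set C := {x : Fin 3 → ℝ | 0 ≤ ε * x 0 ∧ x 1 ≤ ε * x 0 ∧ 0 ≤ x 1 ∧ x 2 ≤ ε * x 0 ∧ 0 ≤ x 2
      ∧ x 2 * (ε * x 0) = (x 1) ^ 2} with hC
  have hclosed : IsClosed C := by
    rw [hC]
    simp only [Set.setOf_and]
    refine IsClosed.inter (isClosed_le continuous_const (continuous_const.mul (continuous_apply 0)))
      (IsClosed.inter (isClosed_le (continuous_apply 1) (continuous_const.mul (continuous_apply 0)))
      (IsClosed.inter (isClosed_le continuous_const (continuous_apply 1))
      (IsClosed.inter (isClosed_le (continuous_apply 2) (continuous_const.mul (continuous_apply 0)))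
      (IsClosed.inter (isClosed_le continuous_const (continuous_apply 2))
      (isClosed_eq ((continuous_apply 2).mul (continuous_const.mul (continuous_apply 0)))
        ((continuous_apply 1).pow 2))))))
  have hsub : Γ ⊆ C := by
    rintro x ⟨t, l, ht0, ht1, hl, rfl⟩
    have h0 : (l • ![ε, t, t ^ 2]) 0 = l * ε := by simp
    have h1 : (l • ![ε, t, t ^ 2]) 1 = l * t := by simp
    have h2 : (l • ![ε, t, t ^ 2]) 2 = l * t ^ 2 := by simp
    have hL : ε * (l * ε) = l := by linear_combination l * hε
    refine ⟨?_, ?_, ?_, ?_, ?_, ?_⟩ <;>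
      simp only [Set.mem_setOf_eq, h0, h1, h2, hL]
    · exact hl.le
    · nlinarith
    · positivity
    · nlinarith [mul_nonneg (mul_nonneg hl.le (sub_nonneg.2 ht1)) (by linarith : (0:ℝ) ≤ 1 + t)]
    · positivity
    · ring
  rintro x ⟨hx, hx0⟩
  have hxC : x ∈ C := closure_minimal hsub hclosed hx
  rw [hC] at hxC
  obtain ⟨hA, hB, hB', hD, hD', hE⟩ := hxC
  rcases eq_or_lt_of_le hA with hL0 | hLpos
  · exfalso
    apply hx0
    have hx1 : x 1 = 0 := le_antisymm (by rw [← hL0] at hB; linarith) hB'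
    have hx2 : x 2 = 0 := le_antisymm (by rw [← hL0] at hD; linarith) hD'
    have hx00 : x 0 = 0 := by
      have : ε * (ε * x 0) = ε * 0 := by rw [← hL0]
      have h' : x 0 = ε * (ε * x 0) := by linear_combination (x 0) * hε.symm
      rw [h', this, mul_zero]
    have : x = 0 := by funext i; fin_cases i <;> simpa [hx00, hx1, hx2]
    simpa using this
  · set L := ε * x 0 with hLdef
    refine ⟨x 1 / L, L, div_nonneg hB' hLpos.le, (div_le_one hLpos).mpr hB, hLpos, ?_⟩
    funext i
    fin_cases i
    · show x 0 = (L • ![ε, x 1 / L, (x 1 / L) ^ 2]) 0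
      simp only [Pi.smul_apply, Matrix.cons_val_zero, smul_eq_mul]
      rw [hLdef]; linear_combination (-(x 0)) * hε
    · show x 1 = (L • ![ε, x 1 / L, (x 1 / L) ^ 2]) 1
      simp only [Pi.smul_apply, Matrix.cons_val_one, Matrix.head_cons, smul_eq_mul, Matrix.cons_val_zero]
      field_simp
    · show x 2 = (L • ![ε, x 1 / L, (x 1 / L) ^ 2]) 2
      have hLne : L ≠ 0 := hLpos.ne'
      have key : L * (x 1 / L) ^ 2 = x 2 := by
        field_simp
        linear_combination (-1) * hE
      simp only [Pi.smul_apply, smul_eq_mul, Matrix.cons_val_two, Matrix.tail_cons,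
        Matrix.head_cons]
      exact key.symm


/--
In `ℝ³` let `Γ₁ = {λ•(−1,t,t²) : 0 ≤ t ≤ 1, λ > 0}` and
`Γ₂ = {λ•(1,t,t²) : 0 ≤ t ≤ 1, λ > 0}`. Then (a) `Γ₁`, `Γ₂` are closed cones in
`ℝ³ \ {0}`; (b) `(0,2,0)` lies in the closure of `Γ₁ + Γ₂` in `ℝ³ \ {0}`;
(c) `(0,2,0) ∉ (Γ₁ + Γ₂) ∪ Γ₁ ∪ Γ₂`. In particular, the identity
"closure of `Γ₁ + Γ₂` in `ℝⁿ \ {0}` equals `(Γ₁ + Γ₂) ∪ Γ₁ ∪ Γ₂`" can fail when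
`0 ∈ Γ₁ + Γ₂`.
-/
theorem stmt3
    (Γ₁ Γ₂ : Set (Fin 3 → ℝ))
    (hΓ₁ : Γ₁ = {x | ∃ t l : ℝ, 0 ≤ t ∧ t ≤ 1 ∧ 0 < l ∧ x = l • ![(-1 : ℝ), t, t ^ 2]})
    (hΓ₂ : Γ₂ = {x | ∃ t l : ℝ, 0 ≤ t ∧ t ≤ 1 ∧ 0 < l ∧ x = l • ![(1 : ℝ), t, t ^ 2]}) :
    -- (a) Γ₁ and Γ₂ are closed cones in ℝ³ \ {0}:
    ((0 : Fin 3 → ℝ) ∉ Γ₁ ∧ (0 : Fin 3 → ℝ) ∉ Γ₂ ∧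
      (∀ ξ ∈ Γ₁, ∀ s : ℝ, 0 < s → s • ξ ∈ Γ₁) ∧
      (∀ ξ ∈ Γ₂, ∀ s : ℝ, 0 < s → s • ξ ∈ Γ₂) ∧
      closure Γ₁ \ {0} ⊆ Γ₁ ∧ closure Γ₂ \ {0} ⊆ Γ₂) ∧
    -- (b) (0,2,0) lies in the closure of Γ₁ + Γ₂ in ℝ³ \ {0}:
    (![(0 : ℝ), 2, 0] ∈ closure (Γ₁ + Γ₂) \ {0}) ∧
    -- (c) (0,2,0) ∉ (Γ₁ + Γ₂) ∪ Γ₁ ∪ Γ₂, so the closure identity fails: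
    (![(0 : ℝ), 2, 0] ∉ (Γ₁ + Γ₂) ∪ Γ₁ ∪ Γ₂) ∧
    (0 : Fin 3 → ℝ) ∈ Γ₁ + Γ₂ ∧
    closure (Γ₁ + Γ₂) \ {0} ≠ (Γ₁ + Γ₂) ∪ Γ₁ ∪ Γ₂ := by
  subst hΓ₁ hΓ₂
  have hne : (![(0:ℝ),2,0] : Fin 3 → ℝ) ≠ 0 := by
    intro h
    have := congrFun h 1
    simp at this
  have hnot1 : ∀ ε : ℝ, ε ≠ 0 → ![(0:ℝ),2,0] ∉
      {x : Fin 3 → ℝ | ∃ t l : ℝ, 0 ≤ t ∧ t ≤ 1 ∧ 0 < l ∧ x = l • ![ε, t, t ^ 2]} := by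
    intro ε hεne
    rintro ⟨t, l, _, _, hl, hEq⟩
    have h := congrFun hEq 0
    simp only [Pi.smul_apply, Matrix.cons_val_zero, smul_eq_mul] at h
    exact hεne ((mul_eq_zero.mp h.symm).resolve_left hl.ne')
  -- (b): closure membership
  have hb : (![(0:ℝ),2,0] : Fin 3 → ℝ) ∈
      closure ({x : Fin 3 → ℝ | ∃ t l : ℝ, 0 ≤ t ∧ t ≤ 1 ∧ 0 < l ∧ x = l • ![(-1 : ℝ), t, t ^ 2]} +
        {x | ∃ t l : ℝ, 0 ≤ t ∧ t ≤ 1 ∧ 0 < l ∧ x = l • ![(1 : ℝ), t, t ^ 2]}) := by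
    have hmem : ∀ n : ℕ, (![(0:ℝ), 2, 2 / ((n:ℝ)+1)] : Fin 3 → ℝ) ∈
        ({x : Fin 3 → ℝ | ∃ t l : ℝ, 0 ≤ t ∧ t ≤ 1 ∧ 0 < l ∧ x = l • ![(-1 : ℝ), t, t ^ 2]} +
         {x | ∃ t l : ℝ, 0 ≤ t ∧ t ≤ 1 ∧ 0 < l ∧ x = l • ![(1 : ℝ), t, t ^ 2]}) := by
      intro n
      have hn : (0:ℝ) < (n:ℝ) + 1 := by positivity
      refine Set.mem_add.mpr ⟨((n:ℝ)+1) • ![(-1:ℝ), 1/((n:ℝ)+1), (1/((n:ℝ)+1))^2], ?_,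
        ((n:ℝ)+1) • ![(1:ℝ), 1/((n:ℝ)+1), (1/((n:ℝ)+1))^2], ?_, ?_⟩
      · exact ⟨1/((n:ℝ)+1), (n:ℝ)+1, by positivity, by
          rw [div_le_one hn]; linarith, hn, rfl⟩
      · exact ⟨1/((n:ℝ)+1), (n:ℝ)+1, by positivity, by
          rw [div_le_one hn]; linarith, hn, rfl⟩
      · funext i
        fin_cases i <;> (simp; try field_simp) <;> try ring
    have htend : Filter.Tendsto (fun n : ℕ => (![(0:ℝ), 2, 2 / ((n:ℝ)+1)] : Fin 3 → ℝ))
        Filter.atTop (nhds ![(0:ℝ),2,0]) := by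
      rw [tendsto_pi_nhds]
      intro i
      fin_cases i
      · simpa using (tendsto_const_nhds : Filter.Tendsto (fun _ : ℕ => (0:ℝ)) Filter.atTop (nhds 0))
      · simpa using (tendsto_const_nhds : Filter.Tendsto (fun _ : ℕ => (2:ℝ)) Filter.atTop (nhds 2))
      · have : Filter.Tendsto (fun n : ℕ => 2 / ((n:ℝ)+1)) Filter.atTop (nhds 0) :=
          Filter.Tendsto.div_atTop tendsto_const_nhds
            (Filter.tendsto_atTop_add_const_right _ 1 tendsto_natCast_atTop_atTop)
        simpa using this
    exact mem_closure_of_tendsto htend (Filter.Eventually.of_forall hmem)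
  -- (c): not in union
  have hc : (![(0:ℝ),2,0] : Fin 3 → ℝ) ∉
      (({x : Fin 3 → ℝ | ∃ t l : ℝ, 0 ≤ t ∧ t ≤ 1 ∧ 0 < l ∧ x = l • ![(-1 : ℝ), t, t ^ 2]} +
        {x | ∃ t l : ℝ, 0 ≤ t ∧ t ≤ 1 ∧ 0 < l ∧ x = l • ![(1 : ℝ), t, t ^ 2]}) ∪
        {x | ∃ t l : ℝ, 0 ≤ t ∧ t ≤ 1 ∧ 0 < l ∧ x = l • ![(-1 : ℝ), t, t ^ 2]}) ∪
        {x | ∃ t l : ℝ, 0 ≤ t ∧ t ≤ 1 ∧ 0 < l ∧ x = l • ![(1 : ℝ), t, t ^ 2]} := by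
    intro hmem
    rcases hmem with hmem | hmem
    rcases hmem with hmem | hmem
    · obtain ⟨a, ⟨t, l, ht0, ht1, hl, rfl⟩, b, ⟨u, m, hu0, hu1, hm, rfl⟩, hsum⟩ :=
        Set.mem_add.mp hmem
      have h0 := congrFun hsum 0
      have h1 := congrFun hsum 1
      have h2 := congrFun hsum 2
      simp only [Pi.add_apply, Pi.smul_apply, Matrix.cons_val_zero, Matrix.cons_val_one,
        Matrix.head_cons, Matrix.cons_val_two, Matrix.tail_cons, smul_eq_mul] at h0 h1 h2
      have ht2 : t ^ 2 = 0 := by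
        nlinarith [mul_nonneg hl.le (sq_nonneg t), mul_nonneg hm.le (sq_nonneg u)]
      have hu2 : u ^ 2 = 0 := by
        nlinarith [mul_nonneg hl.le (sq_nonneg t), mul_nonneg hm.le (sq_nonneg u)]
      have htz : t = 0 := by nlinarith [sq_nonneg t]
      have huz : u = 0 := by nlinarith [sq_nonneg u]
      rw [htz, huz] at h1
      norm_num at h1
    · exact hnot1 (-1) (by norm_num) hmem
    · exact hnot1 1 (by norm_num) hmem
  refine ⟨⟨?_, ?_, ?_, ?_, ?_, ?_⟩, ⟨hb, by simpa using hne⟩, hc, ?_, ?_⟩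
  · rintro ⟨t, l, _, _, hl, hEq⟩
    have h := congrFun hEq 0
    simp only [Pi.zero_apply, Pi.smul_apply, Matrix.cons_val_zero, smul_eq_mul] at h
    nlinarith
  · rintro ⟨t, l, _, _, hl, hEq⟩
    have h := congrFun hEq 0
    simp only [Pi.zero_apply, Pi.smul_apply, Matrix.cons_val_zero, smul_eq_mul] at h
    nlinarith
  · rintro ξ ⟨t, l, ht0, ht1, hl, rfl⟩ s hs
    exact ⟨t, s * l, ht0, ht1, mul_pos hs hl, by rw [smul_smul]⟩
  · rintro ξ ⟨t, l, ht0, ht1, hl, rfl⟩ s hs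
    exact ⟨t, s * l, ht0, ht1, mul_pos hs hl, by rw [smul_smul]⟩
  · exact gamma_char (-1) (by norm_num)
  · exact gamma_char 1 (by norm_num)
  · refine Set.mem_add.mpr ⟨![(-1:ℝ),0,0], ⟨0, 1, le_refl 0, zero_le_one, one_pos, by
      funext i; fin_cases i <;> simp⟩, ![(1:ℝ),0,0], ⟨0, 1, le_refl 0, zero_le_one, one_pos, by
      funext i; fin_cases i <;> simp⟩, by funext i; fin_cases i <;> simp⟩
  · intro heq
    exact hc (heq ▸ ⟨hb, by simpa using hne⟩)
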